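/- Slater's theorem (Theorem 1 of Slater 1974): if $G$ is a $k$-connected graph, $v$ a vertex of $G$ of degree at least $2k-2$, and $G'$ is obtained from $G$ by a $k$-vertex splitting of $v$ (replacing $v$ by adjacent vertices $a,b$, joining each former neighbor of $v$ to exactly one of $a$ or $b$, such that $\deg_{G'}(a)\ge k$ and $\deg_{G'}(b)\ge k$), then $G'$ is $k$-connected. -/

import Mathlib

/-- A graph on more than `k` vertices is `k`-connected if deleting any set of fewer
than `k` vertices leaves a connected graph. -/
def KConnected {V : Type} [Fintype V] (k : ℕ) (G : SimpleGraph V) : Prop :=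
  k < Fintype.card V ∧
    ∀ s : Finset V, s.card < k → (G.induce ((↑s : Set V)ᶜ)).Connected

/-- The graph obtained from `G` by splitting the vertex `v` into two adjacent vertices
`a = Sum.inr 0` and `b = Sum.inr 1`.  Every former neighbour `u` of `v` is joined to
exactly one of `a`, `b` (to `a` if `part u = true`, to `b` otherwise); all edges of `G`
not incident to `v` are retained. -/
def SplitGraph {V : Type} (G : SimpleGraph V) (v : V) (part : V → Bool) :
    SimpleGraph ({u : V // u ≠ v} ⊕ Fin 2) where
  Adj x y :=
    match x, y with
    | Sum.inl u, Sum.inl w => G.Adj u.1 w.1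
    | Sum.inl u, Sum.inr i => G.Adj u.1 v ∧ (part u.1 = true ↔ i = 0)
    | Sum.inr i, Sum.inl u => G.Adj u.1 v ∧ (part u.1 = true ↔ i = 0)
    | Sum.inr i, Sum.inr j => i ≠ j
  symm := ⟨by
    rintro (u | i) (w | j) h
    · exact h.symm
    · exact h
    · exact h
    · exact h.symm⟩
  loopless := ⟨by
    rintro (u | i) h
    · exact G.irrefl h
    · exact h rfl⟩

lemma fin2_helper : ∀ i o j : Fin 2, i ≠ o → j ≠ i → j = o := by decide

lemma fin2_cases : ∀ i : Fin 2, i = 0 ∨ i = 1 := by decide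

/-- The natural map sending a vertex of `G` to a vertex of the split graph;
`v` is sent to `Sum.inr 0`. -/
def splitg {V : Type} [DecidableEq V] (v : V) (u : V) : {u : V // u ≠ v} ⊕ Fin 2 :=
  if h : u = v then Sum.inr 0 else Sum.inl ⟨u, h⟩

lemma splitg_ne {V : Type} [DecidableEq V] {v u : V} (h : u ≠ v) :
    splitg v u = Sum.inl ⟨u, h⟩ := dif_neg h

lemma splitg_v {V : Type} [DecidableEq V] (v : V) : splitg v v = Sum.inr 0 := dif_pos rfl

/-- Key lifting lemma: a reachability in an induced subgraph of `G` (on a vertex set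
avoiding the deleted set, in the appropriate sense) lifts to reachability in the
corresponding induced subgraph of the split graph. -/
lemma splitg_lift_reach {V : Type} [DecidableEq V]
    (G : SimpleGraph V) (v : V) (part : V → Bool)
    (S' : Finset ({u : V // u ≠ v} ⊕ Fin 2)) (t : Set V)
    (h1 : ∀ u (hne : u ≠ v), u ∈ t →
      (Sum.inl ⟨u, hne⟩ : {u : V // u ≠ v} ⊕ Fin 2) ∉ S')
    (h2 : v ∈ t → (Sum.inr 0 : {u : V // u ≠ v} ⊕ Fin 2) ∉ S' ∧
      (Sum.inr 1 : {u : V // u ≠ v} ⊕ Fin 2) ∉ S')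
    {x y : V} (hx : x ∈ t) (hy : y ∈ t)
    (hr : (G.induce t).Reachable ⟨x, hx⟩ ⟨y, hy⟩)
    (hx' : splitg v x ∈ ((↑S' : Set ({u : V // u ≠ v} ⊕ Fin 2))ᶜ))
    (hy' : splitg v y ∈ ((↑S' : Set ({u : V // u ≠ v} ⊕ Fin 2))ᶜ)) :
    ((SplitGraph G v part).induce ((↑S' : Set ({u : V // u ≠ v} ⊕ Fin 2))ᶜ)).Reachable
      ⟨splitg v x, hx'⟩ ⟨splitg v y, hy'⟩ := by
  have hmem : ∀ p : t, splitg v (p : V) ∈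
      ((↑S' : Set ({u : V // u ≠ v} ⊕ Fin 2))ᶜ) := by
    intro p
    by_cases h : (p : V) = v
    · rw [h, splitg_v]
      simpa using (h2 (h ▸ p.2)).1
    · rw [splitg_ne h]
      simpa using h1 _ h p.2
  set F : t → ((↑S' : Set ({u : V // u ≠ v} ⊕ Fin 2))ᶜ : Set _) :=
    fun p => ⟨splitg v (p : V), hmem p⟩ with hF
  rw [SimpleGraph.reachable_iff_reflTransGen] at hr
  have key : ∀ p q : t, (G.induce t).Adj p q →
      Relation.ReflTransGen
        ((SplitGraph G v part).induce ((↑S' : Set ({u : V // u ≠ v} ⊕ Fin 2))ᶜ)).Adj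
        (F p) (F q) := by
    intro p q hpq
    rw [← SimpleGraph.reachable_iff_reflTransGen]
    have hadj : G.Adj (p : V) (q : V) := hpq
    by_cases hp : (p : V) = v
    · by_cases hq : (q : V) = v
      · rw [hp, hq] at hadj; exact absurd hadj (G.irrefl)
      · have hqv : G.Adj (q : V) v := hp ▸ hadj.symm
        have m0 : (Sum.inr 0 : {u : V // u ≠ v} ⊕ Fin 2) ∈
            ((↑S' : Set ({u : V // u ≠ v} ⊕ Fin 2))ᶜ) := by
          simpa using (h2 (hp ▸ p.2)).1
        have eFp : F p = ⟨Sum.inr 0, m0⟩ := by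
          apply Subtype.ext; simp [hF, hp, splitg_v]
        have mq : (Sum.inl ⟨(q : V), hq⟩ : {u : V // u ≠ v} ⊕ Fin 2) ∈
            ((↑S' : Set ({u : V // u ≠ v} ⊕ Fin 2))ᶜ) := by
          simpa using h1 _ hq q.2
        have eFq : F q = ⟨Sum.inl ⟨(q : V), hq⟩, mq⟩ := by
          apply Subtype.ext; simp [hF, splitg_ne hq]
        rw [eFp, eFq]
        cases hpart : part (q : V) with
        | true =>
          exact SimpleGraph.Adj.reachable
            (show (SplitGraph G v part).Adj (Sum.inr 0) (Sum.inl ⟨(q : V), hq⟩) from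
              ⟨hqv, by simp [hpart]⟩)
        | false =>
          have hb1 : (Sum.inr 1 : {u : V // u ≠ v} ⊕ Fin 2) ∈
              ((↑S' : Set ({u : V // u ≠ v} ⊕ Fin 2))ᶜ) := by
            simpa using (h2 (hp ▸ p.2)).2
          have s1 : ((SplitGraph G v part).induce
              ((↑S' : Set ({u : V // u ≠ v} ⊕ Fin 2))ᶜ)).Reachable
              ⟨Sum.inr 0, m0⟩ ⟨Sum.inr 1, hb1⟩ :=
            SimpleGraph.Adj.reachable
              (show (SplitGraph G v part).Adj (Sum.inr 0) (Sum.inr 1) from (by decide : (0 : Fin 2) ≠ 1))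
          have s2 : ((SplitGraph G v part).induce
              ((↑S' : Set ({u : V // u ≠ v} ⊕ Fin 2))ᶜ)).Reachable
              ⟨Sum.inr 1, hb1⟩ ⟨Sum.inl ⟨(q : V), hq⟩, mq⟩ :=
            SimpleGraph.Adj.reachable
              (show (SplitGraph G v part).Adj (Sum.inr 1) (Sum.inl ⟨(q : V), hq⟩) from
                ⟨hqv, by simp [hpart]⟩)
          exact s1.trans s2
    · by_cases hq : (q : V) = v
      · have hpv : G.Adj (p : V) v := hq ▸ hadj
        have m0 : (Sum.inr 0 : {u : V // u ≠ v} ⊕ Fin 2) ∈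
            ((↑S' : Set ({u : V // u ≠ v} ⊕ Fin 2))ᶜ) := by
          simpa using (h2 (hq ▸ q.2)).1
        have eFq : F q = ⟨Sum.inr 0, m0⟩ := by
          apply Subtype.ext; simp [hF, hq, splitg_v]
        have mp : (Sum.inl ⟨(p : V), hp⟩ : {u : V // u ≠ v} ⊕ Fin 2) ∈
            ((↑S' : Set ({u : V // u ≠ v} ⊕ Fin 2))ᶜ) := by
          simpa using h1 _ hp p.2
        have eFp : F p = ⟨Sum.inl ⟨(p : V), hp⟩, mp⟩ := by
          apply Subtype.ext; simp [hF, splitg_ne hp]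
        rw [eFp, eFq]
        cases hpart : part (p : V) with
        | true =>
          exact SimpleGraph.Adj.reachable
            (show (SplitGraph G v part).Adj (Sum.inl ⟨(p : V), hp⟩) (Sum.inr 0) from
              ⟨hpv, by simp [hpart]⟩)
        | false =>
          have hb1 : (Sum.inr 1 : {u : V // u ≠ v} ⊕ Fin 2) ∈
              ((↑S' : Set ({u : V // u ≠ v} ⊕ Fin 2))ᶜ) := by
            simpa using (h2 (hq ▸ q.2)).2
          have s1 : ((SplitGraph G v part).induce
              ((↑S' : Set ({u : V // u ≠ v} ⊕ Fin 2))ᶜ)).Reachable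
              ⟨Sum.inl ⟨(p : V), hp⟩, mp⟩ ⟨Sum.inr 1, hb1⟩ :=
            SimpleGraph.Adj.reachable
              (show (SplitGraph G v part).Adj (Sum.inl ⟨(p : V), hp⟩) (Sum.inr 1) from
                ⟨hpv, by simp [hpart]⟩)
          have s2 : ((SplitGraph G v part).induce
              ((↑S' : Set ({u : V // u ≠ v} ⊕ Fin 2))ᶜ)).Reachable
              ⟨Sum.inr 1, hb1⟩ ⟨Sum.inr 0, m0⟩ :=
            SimpleGraph.Adj.reachable
              (show (SplitGraph G v part).Adj (Sum.inr 1) (Sum.inr 0) from (by decide : (1 : Fin 2) ≠ 0))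
          exact s1.trans s2
      · have mp : (Sum.inl ⟨(p : V), hp⟩ : {u : V // u ≠ v} ⊕ Fin 2) ∈
            ((↑S' : Set ({u : V // u ≠ v} ⊕ Fin 2))ᶜ) := by
          simpa using h1 _ hp p.2
        have eFp : F p = ⟨Sum.inl ⟨(p : V), hp⟩, mp⟩ := by
          apply Subtype.ext; simp [hF, splitg_ne hp]
        have mq : (Sum.inl ⟨(q : V), hq⟩ : {u : V // u ≠ v} ⊕ Fin 2) ∈
            ((↑S' : Set ({u : V // u ≠ v} ⊕ Fin 2))ᶜ) := by
          simpa using h1 _ hq q.2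
        have eFq : F q = ⟨Sum.inl ⟨(q : V), hq⟩, mq⟩ := by
          apply Subtype.ext; simp [hF, splitg_ne hq]
        rw [eFp, eFq]
        exact SimpleGraph.Adj.reachable
          (show (SplitGraph G v part).Adj (Sum.inl ⟨(p : V), hp⟩) (Sum.inl ⟨(q : V), hq⟩)
            from hadj)
  have : Relation.ReflTransGen _ (F ⟨x, hx⟩) (F ⟨y, hy⟩) :=
    Relation.ReflTransGen.lift' F key _ _ hr
  rw [← SimpleGraph.reachable_iff_reflTransGen] at this
  exact this

/-- Slater's theorem: if `G` is `k`-connected, `v` has degree at least `2k-2`, and `G'`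
is obtained from `G` by a `k`-vertex splitting of `v` (both new vertices having degree
at least `k`), then `G'` is `k`-connected. -/
theorem slater_kVertexSplitting {V : Type} [Fintype V] [DecidableEq V] (k : ℕ)
    (G : SimpleGraph V) (v : V) (part : V → Bool)
    (hG : KConnected k G)
    (hdeg : 2 * k - 2 ≤ (G.neighborSet v).ncard)
    (ha : k ≤ ((SplitGraph G v part).neighborSet (Sum.inr 0)).ncard)
    (hb : k ≤ ((SplitGraph G v part).neighborSet (Sum.inr 1)).ncard) :
    KConnected k (SplitGraph G v part) := by
  obtain ⟨hcard, hconn⟩ := hG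
  constructor
  · have h2 : Fintype.card {u : V // u ≠ v} = Fintype.card V - 1 := by
      simp [ne_eq, Fintype.card_subtype_compl, Fintype.card_subtype_eq]
    simp only [Fintype.card_sum, Fintype.card_fin, h2]
    omega
  intro S' hS'
  set f : ({u : V // u ≠ v} ⊕ Fin 2) → V := Sum.elim Subtype.val (fun _ => v) with hf
  set SF : Finset V := S'.image f with hSF
  have hSFcard : SF.card < k := lt_of_le_of_lt Finset.card_image_le hS'
  have hGind := hconn SF hSFcard
  have hinl_mem : ∀ w : {u : V // u ≠ v}, (Sum.inl w : {u : V // u ≠ v} ⊕ Fin 2) ∈ S' →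
      w.1 ∈ SF := fun w h => Finset.mem_image_of_mem f h
  have hinr_mem : ∀ i : Fin 2, (Sum.inr i : {u : V // u ≠ v} ⊕ Fin 2) ∈ S' → v ∈ SF :=
    fun i h => Finset.mem_image_of_mem f h
  have h1' : ∀ u (hne : u ≠ v), u ∈ ((↑SF : Set V)ᶜ) →
      (Sum.inl ⟨u, hne⟩ : {u : V // u ≠ v} ⊕ Fin 2) ∉ S' := by
    intro u hne hu hmem
    exact absurd (hinl_mem _ hmem) (by simpa using hu)
  have hSF_mem : ∀ u : V, u ∈ SF → u = v ∨ ∃ hne : u ≠ v,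
      (Sum.inl ⟨u, hne⟩ : {u : V // u ≠ v} ⊕ Fin 2) ∈ S' := by
    intro u hu
    rw [hSF, Finset.mem_image] at hu
    obtain ⟨x, hx, hfx⟩ := hu
    cases x with
    | inl w =>
      right
      have hne : u ≠ v := hfx ▸ w.2
      refine ⟨hne, ?_⟩
      have : (⟨u, hne⟩ : {u : V // u ≠ v}) = w := Subtype.ext hfx.symm
      rw [this]; exact hx
    | inr i => exact Or.inl hfx.symm
  have hnotSF : ∀ w : {u : V // u ≠ v},
      (Sum.inl w : {u : V // u ≠ v} ⊕ Fin 2) ∉ S' → w.1 ∈ ((↑SF : Set V)ᶜ) := by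
    intro w h
    simp only [Set.mem_compl_iff, Finset.mem_coe]
    intro hmem
    rcases hSF_mem _ hmem with h' | ⟨hne, h'⟩
    · exact w.2 h'
    · exact h h'
  have reachInl : v ∈ SF → ∀ (w1 w2 : {u : V // u ≠ v})
      (hz1 : (Sum.inl w1 : {u : V // u ≠ v} ⊕ Fin 2) ∈
        ((↑S' : Set ({u : V // u ≠ v} ⊕ Fin 2))ᶜ))
      (hz2 : (Sum.inl w2 : {u : V // u ≠ v} ⊕ Fin 2) ∈
        ((↑S' : Set ({u : V // u ≠ v} ⊕ Fin 2))ᶜ)),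
      ((SplitGraph G v part).induce ((↑S' : Set ({u : V // u ≠ v} ⊕ Fin 2))ᶜ)).Reachable
        ⟨Sum.inl w1, hz1⟩ ⟨Sum.inl w2, hz2⟩ := by
    intro hv w1 w2 hz1 hz2
    have hw1 : w1.1 ∈ ((↑SF : Set V)ᶜ) := hnotSF _ (by simpa using hz1)
    have hw2 : w2.1 ∈ ((↑SF : Set V)ᶜ) := hnotSF _ (by simpa using hz2)
    have hr := hGind.preconnected ⟨w1.1, hw1⟩ ⟨w2.1, hw2⟩
    have m1 : splitg v w1.1 ∈ ((↑S' : Set ({u : V // u ≠ v} ⊕ Fin 2))ᶜ) := by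
      rw [splitg_ne w1.2]; exact hz1
    have m2 : splitg v w2.1 ∈ ((↑S' : Set ({u : V // u ≠ v} ⊕ Fin 2))ᶜ) := by
      rw [splitg_ne w2.2]; exact hz2
    have hlift := splitg_lift_reach G v part S' ((↑SF : Set V)ᶜ) h1'
      (fun h => absurd hv (by simpa using h)) hw1 hw2 hr m1 m2
    have e1 : (⟨Sum.inl w1, hz1⟩ : ((↑S' : Set ({u : V // u ≠ v} ⊕ Fin 2))ᶜ : Set _)) =
        ⟨splitg v w1.1, m1⟩ := Subtype.ext (splitg_ne w1.2).symm
    have e2 : (⟨Sum.inl w2, hz2⟩ : ((↑S' : Set ({u : V // u ≠ v} ⊕ Fin 2))ᶜ : Set _)) =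
        ⟨splitg v w2.1, m2⟩ := Subtype.ext (splitg_ne w2.2).symm
    rw [e1, e2]; exact hlift
  -- the case where exactly one of the two new vertices is deleted
  have hB2 : ∀ i o : Fin 2, (Sum.inr i : {u : V // u ≠ v} ⊕ Fin 2) ∈ S' →
      (Sum.inr o : {u : V // u ≠ v} ⊕ Fin 2) ∉ S' → i ≠ o →
      k ≤ ((SplitGraph G v part).neighborSet (Sum.inr o)).ncard →
      ((SplitGraph G v part).induce
        ((↑S' : Set ({u : V // u ≠ v} ⊕ Fin 2))ᶜ)).Connected := by
    intro i o hi ho hio hk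
    have hv : v ∈ SF := hinr_mem i hi
    have hlt : (↑S' : Set ({u : V // u ≠ v} ⊕ Fin 2)).ncard <
        ((SplitGraph G v part).neighborSet (Sum.inr o)).ncard := by
      rw [Set.ncard_coe_finset]; omega
    obtain ⟨w, hwN, hwS⟩ := Set.exists_mem_notMem_of_ncard_lt_ncard hlt
    have hwadj : (SplitGraph G v part).Adj (Sum.inr o) w := hwN
    obtain (u | j) := w
    · -- found an `inl` neighbour of `Sum.inr o`
      have hu : (Sum.inl u : {u : V // u ≠ v} ⊕ Fin 2) ∈
          ((↑S' : Set ({u : V // u ≠ v} ⊕ Fin 2))ᶜ) := by simpa using hwS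
      have ho' : (Sum.inr o : {u : V // u ≠ v} ⊕ Fin 2) ∈
          ((↑S' : Set ({u : V // u ≠ v} ⊕ Fin 2))ᶜ) := by simpa using ho
      have key : ∀ z (hz : z ∈ ((↑S' : Set ({u : V // u ≠ v} ⊕ Fin 2))ᶜ)),
          ((SplitGraph G v part).induce
            ((↑S' : Set ({u : V // u ≠ v} ⊕ Fin 2))ᶜ)).Reachable ⟨z, hz⟩ ⟨Sum.inl u, hu⟩ := by
        rintro (w' | i') hz
        · exact reachInl hv _ _ hz hu
        · have hi'o : i' = o := by
            have : (Sum.inr i' : {u : V // u ≠ v} ⊕ Fin 2) ∉ S' := by simpa using hz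
            by_contra hne
            exact this (by rw [fin2_helper o i i' (Ne.symm hio) hne]; exact hi)
          subst hi'o
          exact SimpleGraph.Adj.reachable hwadj
      haveI : Nonempty ((↑S' : Set ({u : V // u ≠ v} ⊕ Fin 2))ᶜ : Set _) :=
        ⟨⟨Sum.inl u, hu⟩⟩
      exact ⟨fun x y => (key x.1 x.2).trans (key y.1 y.2).symm⟩
    · exfalso
      have hjo : j ≠ o := (SimpleGraph.ne_of_adj _ hwadj.symm) ∘ congrArg Sum.inr
      have hji : j = i := fin2_helper o i j (Ne.symm hio) hjo
      exact hwS (by rw [hji]; simpa using hi)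
  by_cases hA0 : (Sum.inr 0 : {u : V // u ≠ v} ⊕ Fin 2) ∈ S'
  · by_cases hA1 : (Sum.inr 1 : {u : V // u ≠ v} ⊕ Fin 2) ∈ S'
    · -- both new vertices deleted
      have hv : v ∈ SF := hinr_mem 0 hA0
      obtain ⟨u0, hu0⟩ := hGind.nonempty
      have hu0v : u0 ≠ v := by
        intro h
        exact absurd (h ▸ hv) (by simpa using hu0)
      have hu0S : (Sum.inl ⟨u0, hu0v⟩ : {u : V // u ≠ v} ⊕ Fin 2) ∈
          ((↑S' : Set ({u : V // u ≠ v} ⊕ Fin 2))ᶜ) := by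
        simpa using h1' u0 hu0v hu0
      haveI : Nonempty ((↑S' : Set ({u : V // u ≠ v} ⊕ Fin 2))ᶜ : Set _) :=
        ⟨⟨Sum.inl ⟨u0, hu0v⟩, hu0S⟩⟩
      have hnoinr : ∀ (i : Fin 2), (Sum.inr i : {u : V // u ≠ v} ⊕ Fin 2) ∈
          ((↑S' : Set ({u : V // u ≠ v} ⊕ Fin 2))ᶜ) → False := by
        intro i hi
        have hi' : (Sum.inr i : {u : V // u ≠ v} ⊕ Fin 2) ∉ S' := by simpa using hi
        rcases fin2_cases i with rfl | rfl
        · exact hi' hA0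
        · exact hi' hA1
      refine ⟨?_⟩
      rintro ⟨(w1 | i1), hz1⟩ ⟨(w2 | i2), hz2⟩
      · exact reachInl hv _ _ hz1 hz2
      · exact absurd hz2 (fun h => hnoinr i2 h)
      · exact absurd hz1 (fun h => hnoinr i1 h)
      · exact absurd hz1 (fun h => hnoinr i1 h)
    · exact hB2 0 1 hA0 hA1 (by decide) hb
  · by_cases hA1 : (Sum.inr 1 : {u : V // u ≠ v} ⊕ Fin 2) ∈ S'
    · exact hB2 1 0 hA1 hA0 (by decide) ha
    · -- neither new vertex deleted
      have hvSF : v ∉ SF := by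
        intro hmem
        rcases hSF_mem v hmem with h' | ⟨hne, h'⟩
        · rw [hSF, Finset.mem_image] at hmem
          obtain ⟨x, hx, hfx⟩ := hmem
          obtain (w | i) := x
          · exact w.2 hfx
          · fin_cases i
            · exact hA0 hx
            · exact hA1 hx
        · exact hne rfl
      have m0 : (Sum.inr 0 : {u : V // u ≠ v} ⊕ Fin 2) ∈
          ((↑S' : Set ({u : V // u ≠ v} ⊕ Fin 2))ᶜ) := by simpa using hA0
      have m1 : (Sum.inr 1 : {u : V // u ≠ v} ⊕ Fin 2) ∈
          ((↑S' : Set ({u : V // u ≠ v} ⊕ Fin 2))ᶜ) := by simpa using hA1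
      have hv' : v ∈ ((↑SF : Set V)ᶜ) := by simpa using hvSF
      have key : ∀ z (hz : z ∈ ((↑S' : Set ({u : V // u ≠ v} ⊕ Fin 2))ᶜ)),
          ((SplitGraph G v part).induce
            ((↑S' : Set ({u : V // u ≠ v} ⊕ Fin 2))ᶜ)).Reachable ⟨z, hz⟩ ⟨Sum.inr 0, m0⟩ := by
        rintro (w | i) hz
        · have hw : w.1 ∈ ((↑SF : Set V)ᶜ) := hnotSF _ (by simpa using hz)
          have hr := hGind.preconnected ⟨w.1, hw⟩ ⟨v, hv'⟩
          have mw : splitg v w.1 ∈ ((↑S' : Set ({u : V // u ≠ v} ⊕ Fin 2))ᶜ) := by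
            rw [splitg_ne w.2]; exact hz
          have mv : splitg v v ∈ ((↑S' : Set ({u : V // u ≠ v} ⊕ Fin 2))ᶜ) := by
            rw [splitg_v]; exact m0
          have hlift := splitg_lift_reach G v part S' ((↑SF : Set V)ᶜ) h1'
            (fun _ => ⟨hA0, hA1⟩) hw hv' hr mw mv
          have e1 : (⟨Sum.inl w, hz⟩ :
              ((↑S' : Set ({u : V // u ≠ v} ⊕ Fin 2))ᶜ : Set _)) =
              ⟨splitg v w.1, mw⟩ := Subtype.ext (splitg_ne w.2).symm
          have e2 : (⟨Sum.inr 0, m0⟩ :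
              ((↑S' : Set ({u : V // u ≠ v} ⊕ Fin 2))ᶜ : Set _)) =
              ⟨splitg v v, mv⟩ := Subtype.ext (splitg_v v).symm
          rw [e1, e2]; exact hlift
        · rcases fin2_cases i with rfl | rfl
          · exact SimpleGraph.Reachable.refl _
          · exact SimpleGraph.Adj.reachable
              (show (SplitGraph G v part).Adj (Sum.inr 1) (Sum.inr 0) from
                (by decide : (1 : Fin 2) ≠ 0))
      haveI : Nonempty ((↑S' : Set ({u : V // u ≠ v} ⊕ Fin 2))ᶜ : Set _) :=
        ⟨⟨Sum.inr 0, m0⟩⟩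
      exact ⟨fun x y => (key x.1 x.2).trans (key y.1 y.2).symm⟩
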